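/- Let α ∈ ℝ, let I ⊆ ℝ be an open interval, and let q : I → ℝ be a smooth nonvanishing solution of PIV(α) on I. Define σ(x) := (q(x) − 𝓗(x))/2. Then at every x ∈ I with 2σ'(x) + 4α + 2 ≠ 0, one has q(x) = −( σ''(x) + 2x·σ'(x) − 2σ(x) ) / ( 2σ'(x) + 4α + 2 ). -/

import Mathlib

open Real Filter Set Asymptotics MeasureTheory

noncomputable section

/-- The fourth Painlevé equation PIV(α) at a point `x`:
`q'' = (q')²/(2q) + (3/2)q³ + 4xq² + 2(x²-2α)q`. -/
def PIVEq (α : ℝ) (q : ℝ → ℝ) (x : ℝ) : Prop :=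
  deriv (deriv q) x =
    (deriv q x) ^ 2 / (2 * q x) + (3 / 2) * (q x) ^ 3 + 4 * x * (q x) ^ 2 +
      2 * (x ^ 2 - 2 * α) * q x

/-- The Hamiltonian associated with a solution `q` of PIV(α):
`𝓗(x) = q³/4 + xq² + (x²-2α)q - (q')²/(4q)`. -/
def Ham (α : ℝ) (q : ℝ → ℝ) (x : ℝ) : ℝ :=
  (q x) ^ 3 / 4 + x * (q x) ^ 2 + (x ^ 2 - 2 * α) * q x - (deriv q x) ^ 2 / (4 * q x)

/-- The σ-function `σ = (q - 𝓗)/2` associated with a solution `q` of PIV(α). -/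
def sigmaFn (α : ℝ) (q : ℝ → ℝ) : ℝ → ℝ := fun x => (q x - Ham α q x) / 2

theorem piv_q_from_sigma (α : ℝ) (I : Set ℝ) (hI : IsOpen I) (hI' : I.OrdConnected)
    (q : ℝ → ℝ) (hsm : ContDiffOn ℝ (⊤ : ℕ∞) q I) (hq0 : ∀ x ∈ I, q x ≠ 0)
    (hpiv : ∀ x ∈ I, PIVEq α q x) :
    ∀ x ∈ I, 2 * deriv (sigmaFn α q) x + 4 * α + 2 ≠ 0 →
      q x = -(deriv (deriv (sigmaFn α q)) x + 2 * x * deriv (sigmaFn α q) x -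
              2 * sigmaFn α q x) /
            (2 * deriv (sigmaFn α q) x + 4 * α + 2) := by
  have hd1 : ContDiffOn ℝ (⊤ : ℕ∞) (deriv q) I := hsm.deriv_of_isOpen hI (by simp)
  have hq' : ∀ y ∈ I, HasDerivAt q (deriv q y) y := fun y hy =>
    ((hsm.contDiffAt (hI.mem_nhds hy)).differentiableAt (by simp)).hasDerivAt
  have hq'' : ∀ y ∈ I, HasDerivAt (deriv q) (deriv (deriv q) y) y := fun y hy =>
    ((hd1.contDiffAt (hI.mem_nhds hy)).differentiableAt (by simp)).hasDerivAt
  -- derivative of sigma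
  have hsig : ∀ y ∈ I, HasDerivAt (sigmaFn α q)
      ((deriv q y - q y ^ 2 - 2 * y * q y) / 2) y := by
    intro y hy
    have h0 := hq0 y hy
    have hH : HasDerivAt (Ham α q) (q y ^ 2 + 2 * y * q y) y := by
      have h1 : HasDerivAt (fun z : ℝ => (q z) ^ 3 / 4 + z * (q z) ^ 2 +
          (z ^ 2 - 2 * α) * q z - (deriv q z) ^ 2 / (4 * q z))
          ((3 * q y ^ 2 * deriv q y) / 4 + (q y ^ 2 + y * (2 * q y * deriv q y)) +
            ((2 * y) * q y + (y ^ 2 - 2 * α) * deriv q y) -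
            (2 * deriv q y * deriv (deriv q) y * (4 * q y) -
              deriv q y ^ 2 * (4 * deriv q y)) / (4 * q y) ^ 2) y := by
        refine HasDerivAt.sub (HasDerivAt.add (HasDerivAt.add ?_ ?_) ?_) ?_
        · exact (((hq' y hy).pow 3).div_const 4).congr_deriv (by ring)
        · exact ((hasDerivAt_id y).mul ((hq' y hy).pow 2)).congr_deriv (by simp only [id_eq, Pi.pow_apply]; ring)
        · exact ((((hasDerivAt_id y).pow 2).sub_const (2*α)).mul (hq' y hy)).congr_deriv
            (by simp only [id_eq, Pi.pow_apply]; ring)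
        · exact (((hq'' y hy).pow 2).div ((hq' y hy).const_mul 4)
            (by simpa using mul_ne_zero (by norm_num : (4:ℝ) ≠ 0) h0)).congr_deriv
            (by simp only [Pi.pow_apply]; ring)
      have heq : (fun z : ℝ => (q z) ^ 3 / 4 + z * (q z) ^ 2 +
          (z ^ 2 - 2 * α) * q z - (deriv q z) ^ 2 / (4 * q z)) = Ham α q := rfl
      rw [heq] at h1
      convert h1 using 1
      have hp := hpiv y hy
      rw [PIVEq] at hp
      rw [hp]
      field_simp
      ring
    have := ((hq' y hy).sub hH).div_const 2
    exact this.congr_deriv (by ring)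
  intro x hx hne
  have h0 := hq0 x hx
  -- first derivative value
  have hs1 : deriv (sigmaFn α q) x = (deriv q x - q x ^ 2 - 2 * x * q x) / 2 :=
    (hsig x hx).deriv
  -- second derivative
  have hs2 : deriv (deriv (sigmaFn α q)) x =
      (deriv (deriv q) x - 2 * q x * deriv q x - 2 * q x - 2 * x * deriv q x) / 2 := by
    have hEv : deriv (sigmaFn α q) =ᶠ[nhds x]
        (fun y => (deriv q y - q y ^ 2 - 2 * y * q y) / 2) := by
      filter_upwards [hI.mem_nhds hx] with y hy
      exact (hsig y hy).deriv
    rw [Filter.EventuallyEq.deriv_eq hEv]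
    have hg : HasDerivAt (fun y => (deriv q y - q y ^ 2 - 2 * y * q y) / 2)
        ((deriv (deriv q) x - 2 * q x * deriv q x -
          (2 * q x + 2 * x * deriv q x)) / 2) x := by
      refine HasDerivAt.div_const ?_ 2
      refine (hq'' x hx).sub ?_ |>.sub ?_
      · exact ((hq' x hx).pow 2).congr_deriv (by ring)
      · exact (((hasDerivAt_id x).const_mul 2).mul (hq' x hx)).congr_deriv (by simp only [id_eq]; ring)
    rw [hg.deriv]; ring
  -- sigma value
  have hs0 : sigmaFn α q x = (q x - Ham α q x) / 2 := rfl
  have hp := hpiv x hx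
  rw [PIVEq] at hp
  rw [hs1] at hne
  rw [hs2, hs1, hs0, Ham, hp, eq_div_iff hne]
  field_simp
  ring
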